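/- Let X, Y be Banach spaces and u : [0,∞) → L(X;Y). If for every x ∈ X there is t_x ≥ 0 such that the orbit t ↦ u(t)x has bounded variation on every compact subinterval of (t_x,∞), then there exists t₀ ≥ 0 such that every orbit is locally of bounded variation on (t₀,∞). -/

import Mathlib

open Set Filter
open scoped ENNReal NNReal Topology

private lemma evar_add_le {Y : Type*} [NormedAddCommGroup Y] (f g : ℝ → Y) (s : Set ℝ) :
    eVariationOn (fun t => f t + g t) s ≤ eVariationOn f s + eVariationOn g s := by
  apply iSup_le
  rintro ⟨n, u, hu, us⟩
  calc ∑ i ∈ Finset.range n, edist (f (u (i+1)) + g (u (i+1))) (f (u i) + g (u i))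
      ≤ ∑ i ∈ Finset.range n,
          (edist (f (u (i+1))) (f (u i)) + edist (g (u (i+1))) (g (u i))) :=
        Finset.sum_le_sum fun i _ => edist_add_add_le _ _ _ _
    _ = (∑ i ∈ Finset.range n, edist (f (u (i+1))) (f (u i)))
        + ∑ i ∈ Finset.range n, edist (g (u (i+1))) (g (u i)) := Finset.sum_add_distrib
    _ ≤ _ := add_le_add (eVariationOn.sum_le (f := f) (n := n) hu us) (eVariationOn.sum_le (f := g) (n := n) hu us)

private lemma evar_neg {Y : Type*} [NormedAddCommGroup Y] (f : ℝ → Y) (s : Set ℝ) :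
    eVariationOn (fun t => -f t) s = eVariationOn f s := by
  unfold eVariationOn
  congr 1
  funext p
  congr 1
  funext i
  exact edist_neg_neg _ _

private lemma evar_smul_le {Y : Type*} [NormedAddCommGroup Y] [NormedSpace ℝ Y]
    (c : ℝ) (f : ℝ → Y) (s : Set ℝ) :
    eVariationOn (fun t => c • f t) s ≤ ‖c‖₊ * eVariationOn f s :=
  (lipschitzWith_smul (β := Y) c).lipschitzOnWith.comp_eVariationOn_le (mapsTo_univ f s)

/-- Individually eventually locally of bounded variation implies uniformly
eventually locally of bounded variation. -/
theorem eventually_locally_bounded_variation_individual_implies_uniform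
    {X Y : Type*} [NormedAddCommGroup X] [NormedSpace ℝ X] [CompleteSpace X]
    [NormedAddCommGroup Y] [NormedSpace ℝ Y] [CompleteSpace Y]
    (u : ℝ → X →L[ℝ] Y)
    (h : ∀ x : X, ∃ tx : ℝ, 0 ≤ tx ∧ ∀ a b : ℝ, tx < a → a ≤ b →
      BoundedVariationOn (fun t : ℝ => u t x) (Set.Icc a b)) :
    ∃ t₀ : ℝ, 0 ≤ t₀ ∧ ∀ x : X, ∀ a b : ℝ, t₀ < a → a ≤ b →
      BoundedVariationOn (fun t : ℝ => u t x) (Set.Icc a b) := by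
  classical
  -- the sets T n of vectors whose orbit has bounded variation on every [n+1, b], b ∈ ℕ
  set T : ℕ → Set X := fun n =>
    {x | ∀ b : ℕ, BoundedVariationOn (fun t : ℝ => u t x) (Set.Icc (n+1 : ℝ) b)} with hT
  have hcover : (univ : Set X) ⊆ ⋃ n, T n := by
    intro x _
    obtain ⟨tx, htx0, htx⟩ := h x
    obtain ⟨n, hn⟩ := exists_nat_ge tx
    refine mem_iUnion.2 ⟨n, fun b => ?_⟩
    by_cases hb : (n+1 : ℝ) ≤ b
    · exact htx _ _ (by linarith) hb
    · have he : (Set.Icc (n+1 : ℝ) b) = ∅ := Icc_eq_empty (by linarith)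
      unfold BoundedVariationOn
      rw [he, eVariationOn.subsingleton _ subsingleton_empty]
      simp
  -- some T n is non-meagre
  have hX : ∃ n, ¬ IsMeagre (T n) := by
    by_contra hc
    push_neg at hc
    have hmu : IsMeagre (univ : Set X) := ((isMeagre_iUnion hc).mono hcover)
    have h0 : (∅ : Set X) ∈ residual X := by simpa [IsMeagre] using hmu
    obtain ⟨x, hx⟩ := (dense_of_mem_residual h0).nonempty
    exact hx
  obtain ⟨n, hn⟩ := hX
  refine ⟨(n : ℝ) + 1, by positivity, ?_⟩
  -- key claim: for every natural b, every orbit has bounded variation on [n+1, b]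
  have key : ∀ b : ℕ, ∀ x : X,
      BoundedVariationOn (fun t : ℝ => u t x) (Set.Icc (n+1 : ℝ) b) := by
    intro b
    set s : Set ℝ := Set.Icc (n+1 : ℝ) b with hs
    set C : ℕ → Set X := fun M => {x | eVariationOn (fun t : ℝ => u t x) s ≤ M} with hC
    -- each C M is closed
    have hclosed : ∀ M : ℕ, IsClosed (C M) := by
      intro M
      rw [← isOpen_compl_iff]
      rw [isOpen_iff_mem_nhds]
      intro x hx
      have hx' : (M : ℝ≥0∞) < eVariationOn (fun t : ℝ => u t x) s := lt_of_not_ge hx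
      have := eVariationOn.lowerSemicontinuous_aux
        (F := fun (y : X) (t : ℝ) => u t y) (p := 𝓝 x) (f := fun t : ℝ => u t x) (s := s)
        (fun t _ => ((u t).continuous.tendsto x)) hx'
      exact this.mono fun y hy => not_le.2 hy
    -- T n is contained in the union of the C M
    have hsub : T n ⊆ ⋃ M, C M := by
      intro x hx
      have hfin : eVariationOn (fun t : ℝ => u t x) s ≠ ⊤ := hx b
      obtain ⟨M, hM⟩ := ENNReal.exists_nat_gt hfin
      exact mem_iUnion.2 ⟨M, hM.le⟩
    -- some C M is non-meagre, hence has nonempty interior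
    have hM : ∃ M, ¬ IsMeagre (C M) := by
      by_contra hc
      push_neg at hc
      exact hn ((isMeagre_iUnion hc).mono hsub)
    obtain ⟨M, hM⟩ := hM
    have hint : (interior (C M)).Nonempty := by
      by_contra hemp
      apply hM
      have hnwd : IsNowhereDense (C M) :=
        ((hclosed M).isNowhereDense_iff).2 (not_nonempty_iff_eq_empty.1 hemp)
      have := (isClosed_isNowhereDense_iff_compl.1 ⟨hclosed M, hnwd⟩)
      exact residual_of_dense_open this.1 this.2
    obtain ⟨x₀, hx₀⟩ := hint
    obtain ⟨ε, hε, hball⟩ := Metric.mem_nhds_iff.1 (mem_interior_iff_mem_nhds.1 hx₀)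
    have hball' : ∀ y, dist y x₀ < ε → y ∈ C M := fun y hy => hball hy
    -- uniform bound for small vectors
    have hsmall : ∀ y : X, ‖y‖ < ε →
        eVariationOn (fun t : ℝ => u t y) s ≤ (M : ℝ≥0∞) + M := by
      intro y hy
      have h1 : x₀ + y ∈ C M := hball' _ (by simpa [dist_eq_norm] using hy)
      have h2 : x₀ ∈ C M := hball' _ (by simpa using hε)
      have heq : (fun t : ℝ => u t y)
          = fun t : ℝ => (u t (x₀ + y)) + -(u t x₀) := by
        funext t; simp [map_add]
      rw [heq]
      calc eVariationOn (fun t : ℝ => (u t (x₀ + y)) + -(u t x₀)) s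
          ≤ eVariationOn (fun t : ℝ => u t (x₀ + y)) s
            + eVariationOn (fun t : ℝ => -(u t x₀)) s := evar_add_le _ _ _
        _ = eVariationOn (fun t : ℝ => u t (x₀ + y)) s
            + eVariationOn (fun t : ℝ => u t x₀) s := by rw [evar_neg]
        _ ≤ (M : ℝ≥0∞) + M := add_le_add h1 h2
    -- conclude for every vector by scaling
    intro x
    by_cases hx : x = 0
    · subst hx
      have : eVariationOn (fun t : ℝ => u t (0 : X)) s = 0 := by
        apply eVariationOn.constant_on
        intro a ha b hb
        obtain ⟨ta, -, rfl⟩ := ha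
        obtain ⟨tb, -, rfl⟩ := hb
        simp
      unfold BoundedVariationOn
      rw [this]
      simp
    · set c : ℝ := ε / (2 * ‖x‖) with hc'
      have hxpos : 0 < ‖x‖ := norm_pos_iff.2 hx
      have hcpos : 0 < c := by positivity
      have hnorm : ‖c • x‖ < ε := by
        rw [norm_smul, Real.norm_eq_abs, abs_of_pos hcpos, hc']
        rw [div_mul_eq_mul_div, mul_comm]
        rw [div_lt_iff₀ (by positivity)]
        nlinarith
      have hcx := hsmall (c • x) hnorm
      have heq : (fun t : ℝ => u t x) = fun t : ℝ => c⁻¹ • (u t (c • x)) := by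
        funext t
        rw [map_smul, smul_smul, inv_mul_cancel₀ hcpos.ne', one_smul]
      unfold BoundedVariationOn
      rw [heq]
      refine ne_top_of_le_ne_top ?_ (evar_smul_le c⁻¹ _ s)
      exact ENNReal.mul_ne_top ENNReal.coe_ne_top
        (ne_top_of_le_ne_top (by simp) hcx)
  -- deduce the statement for arbitrary real intervals
  intro x a b ha hab
  obtain ⟨N, hN⟩ := exists_nat_ge b
  exact (key N x).mono (Icc_subset_Icc ha.le hN)
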